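/- Let b > 0 and λ < 0. Then there exists ε₀ > 0 such that for all ε ∈ (0, ε₀): (λ − bε)² − 4ε > 0, and the eigenvalue μ₂ = (1/(2ε))(−λ − bε + √((λ − bε)² − 4ε)) of the matrix A = [[−λ/ε, −1/ε], [1, −b]] is real and strictly positive. In particular, if the first Sturm–Liouville eigenvalue λ₀ is negative, then for ε small enough the linearized system (E_0) has a positive real eigenvalue, so the stationary solution is linearly unstable. -/

import Mathlib

/-- Let `b > 0` and `λ < 0`.  There exists `ε₀ > 0` such that for all `ε ∈ (0, ε₀)`:
`(λ - bε)² - 4ε > 0`, and `μ₂ = (1/(2ε))(-λ - bε + √((λ - bε)² - 4ε))` is real,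
strictly positive, and an eigenvalue of `A = [[-λ/ε, -1/ε], [1, -b]]`.  In
particular, if the first Sturm–Liouville eigenvalue `λ₀` is negative, the
linearized system `(E_0)` has a positive real eigenvalue for small `ε`, so the
stationary solution is linearly unstable. -/
theorem stmt_19 (b lam : ℝ) (hb : 0 < b) (hlam : lam < 0) :
    ∃ ε₀ > (0:ℝ), ∀ ε ∈ Set.Ioo (0:ℝ) ε₀,
      0 < (lam - b*ε)^2 - 4*ε ∧
      0 < (1/(2*ε)) * (-lam - b*ε + Real.sqrt ((lam - b*ε)^2 - 4*ε)) ∧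
      ((!![-lam/ε, -1/ε; 1, -b] : Matrix (Fin 2) (Fin 2) ℝ)
        - ((1/(2*ε)) * (-lam - b*ε + Real.sqrt ((lam - b*ε)^2 - 4*ε))) • 1).det = 0 := by
  have hlam2 : (0:ℝ) < lam^2/4 := by nlinarith
  refine ⟨min (lam^2/4) (-lam/b), lt_min hlam2 (div_pos (by linarith) hb), ?_⟩
  rintro ε ⟨hε0, hεlt⟩
  have hε1 : ε < lam^2/4 := lt_of_lt_of_le hεlt (min_le_left _ _)
  have hε2 : ε < -lam/b := lt_of_lt_of_le hεlt (min_le_right _ _)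
  have hbe : b * ε < -lam := by
    have := (lt_div_iff₀ hb).mp hε2
    linarith
  have hdisc : 0 < (lam - b*ε)^2 - 4*ε := by
    have h1 : lam^2 ≤ (lam - b*ε)^2 := by nlinarith [mul_pos hb hε0]
    linarith
  refine ⟨hdisc, ?_, ?_⟩
  · have hs : 0 ≤ Real.sqrt ((lam - b*ε)^2 - 4*ε) := Real.sqrt_nonneg _
    have : 0 < -lam - b*ε + Real.sqrt ((lam - b*ε)^2 - 4*ε) := by linarith
    positivity
  · have hs : Real.sqrt ((lam - b*ε)^2 - 4*ε) ^ 2 = (lam - b*ε)^2 - 4*ε :=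
      Real.sq_sqrt hdisc.le
    set s := Real.sqrt ((lam - b*ε)^2 - 4*ε) with hsdef
    have hεne : ε ≠ 0 := ne_of_gt hε0
    simp [Matrix.det_fin_two, Matrix.smul_apply, Matrix.one_apply]
    field_simp
    linear_combination hs
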